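/- Let A(u,v) be the arrow graph and let H = A(u,v) − u be the graph obtained by deleting the vertex u. Then {a2, v} is an odd cycle transversal of H, and every odd cycle transversal of H has size at least 2. -/

import Mathlib

open SimpleGraph

/-- The nine vertices of the arrow graph `A(u,v)`. -/
inductive ArrowV : Type
  | u | a1 | a2 | a3 | v | b1 | b2 | b3 | b4
  deriving DecidableEq

instance instFintypeArrowV : Fintype ArrowV where
  elems := {ArrowV.u, ArrowV.a1, ArrowV.a2, ArrowV.a3, ArrowV.v, ArrowV.b1, ArrowV.b2,
    ArrowV.b3, ArrowV.b4}
  complete := fun x => by cases x <;> simp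

/-- The arrow graph `A(u,v)`, with edges
`u a1, a1 a2, a2 a3, a3 v, u b1, b1 a1, a1 b2, b2 a2, a2 b3, b3 a3, a3 b4, b4 v`. -/
def arrowGraph : SimpleGraph ArrowV :=
  SimpleGraph.fromRel (fun x y =>
    (x, y) ∈ ([(ArrowV.u, ArrowV.a1), (ArrowV.a1, ArrowV.a2), (ArrowV.a2, ArrowV.a3),
      (ArrowV.a3, ArrowV.v), (ArrowV.u, ArrowV.b1), (ArrowV.b1, ArrowV.a1),
      (ArrowV.a1, ArrowV.b2), (ArrowV.b2, ArrowV.a2), (ArrowV.a2, ArrowV.b3),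
      (ArrowV.b3, ArrowV.a3), (ArrowV.a3, ArrowV.b4), (ArrowV.b4, ArrowV.v)] :
        List (ArrowV × ArrowV)))

/-- `X` is an odd cycle transversal of `H`: the graph `H − X` contains no odd cycle. -/
def IsOCT {W : Type*} (H : SimpleGraph W) (X : Set W) : Prop :=
  ∀ (a : ↥Xᶜ) (c : (H.induce Xᶜ).Walk a a), c.IsCycle → ¬ Odd c.length

/-- The arrow graph with the vertex `u` deleted. -/
def arrowDelU : SimpleGraph ↥{w : ArrowV | w ≠ ArrowV.u} :=
  arrowGraph.induce {w : ArrowV | w ≠ ArrowV.u}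

lemma walk_parity {V : Type*} {G : SimpleGraph V} (f : V → Bool)
    (hf : ∀ x y, G.Adj x y → f x ≠ f y) :
    ∀ {x y : V} (w : G.Walk x y), f x = f y ↔ Even w.length := by
  intro x y w
  induction w with
  | nil => simp
  | cons h p ih =>
    rename_i a b c
    have hab := hf _ _ h
    simp only [Walk.length_cons, Nat.even_add_one, ← ih]
    rcases Bool.eq_false_or_eq_true (f a) with h1 | h1 <;>
      rcases Bool.eq_false_or_eq_true (f b) with h2 | h2 <;>
      rcases Bool.eq_false_or_eq_true (f c) with h3 | h3 <;>
      simp_all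

lemma triangle_cycle {V : Type*} {G : SimpleGraph V} {p q r : V}
    (hpq : G.Adj p q) (hqr : G.Adj q r) (hrp : G.Adj r p) :
    ((Walk.cons hpq (Walk.cons hqr (Walk.cons hrp Walk.nil))) : G.Walk p p).IsCycle := by
  have h1 := hpq.ne
  have h2 := hqr.ne
  have h3 := hrp.ne
  rw [Walk.isCycle_def]
  refine ⟨⟨by simp [Walk.isTrail_def]; aesop⟩, by simp, by simp; aesop⟩

instance : DecidableRel arrowGraph.Adj := fun a b => by
  rw [arrowGraph, fromRel_adj]; infer_instance

def arrowColor : ArrowV → Bool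
  | .b1 | .b2 | .b3 | .b4 => true
  | _ => false

lemma color_key : ∀ a b : ArrowV, arrowGraph.Adj a b → a ≠ .u → a ≠ .a2 → a ≠ .v →
    b ≠ .u → b ≠ .a2 → b ≠ .v → arrowColor a ≠ arrowColor b := by decide

/-- `{a2, v}` is an OCT of `A(u,v) − u`, and every OCT of `A(u,v) − u` has size at
least 2. -/
theorem stmt11 :
    IsOCT arrowDelU
      {(⟨ArrowV.a2, by simp⟩ : ↥{w : ArrowV | w ≠ ArrowV.u}), ⟨ArrowV.v, by simp⟩} ∧
    (∀ X : Set ↥{w : ArrowV | w ≠ ArrowV.u}, IsOCT arrowDelU X → 2 ≤ X.ncard) := by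
  constructor
  · intro a c hc hodd
    set X₀ : Set ↥{w : ArrowV | w ≠ ArrowV.u} :=
      {⟨ArrowV.a2, by simp⟩, ⟨ArrowV.v, by simp⟩} with hX₀
    have hf : ∀ x y : ↥X₀ᶜ, (arrowDelU.induce X₀ᶜ).Adj x y →
        arrowColor x.1.1 ≠ arrowColor y.1.1 := by
      intro x y hadj
      have hAdj : arrowGraph.Adj x.1.1 y.1.1 := hadj
      have hx := x.2
      have hy := y.2
      simp only [hX₀, Set.mem_compl_iff, Set.mem_insert_iff, Set.mem_singleton_iff,
        not_or] at hx hy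
      refine color_key _ _ hAdj x.1.2 ?_ ?_ y.1.2 ?_ ?_ <;> intro h
      · exact hx.1 (Subtype.ext h)
      · exact hx.2 (Subtype.ext h)
      · exact hy.1 (Subtype.ext h)
      · exact hy.2 (Subtype.ext h)
    have := (walk_parity (fun p : ↥X₀ᶜ => arrowColor p.1.1) hf c).mp rfl
    exact Nat.not_even_iff_odd.mpr hodd this
  · intro X hX
    by_contra hlt
    push_neg at hlt
    have hle : X.ncard ≤ 1 := by omega
    rw [Set.ncard_le_one_iff (Set.toFinite X)] at hle
    set va1 : ↥{w : ArrowV | w ≠ ArrowV.u} := ⟨ArrowV.a1, by simp⟩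
    set vb2 : ↥{w : ArrowV | w ≠ ArrowV.u} := ⟨ArrowV.b2, by simp⟩
    set va2 : ↥{w : ArrowV | w ≠ ArrowV.u} := ⟨ArrowV.a2, by simp⟩
    set va3 : ↥{w : ArrowV | w ≠ ArrowV.u} := ⟨ArrowV.a3, by simp⟩
    set vb4 : ↥{w : ArrowV | w ≠ ArrowV.u} := ⟨ArrowV.b4, by simp⟩
    set vv : ↥{w : ArrowV | w ≠ ArrowV.u} := ⟨ArrowV.v, by simp⟩
    have key : (va1 ∉ X ∧ vb2 ∉ X ∧ va2 ∉ X) ∨ (va3 ∉ X ∧ vb4 ∉ X ∧ vv ∉ X) := by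
      by_cases hA : va1 ∈ X ∨ vb2 ∈ X ∨ va2 ∈ X
      · right
        refine ⟨?_, ?_, ?_⟩ <;> intro hmem <;> rcases hA with h | h | h <;>
          · have := hle hmem h
            simp [va1, vb2, va2, va3, vb4, vv, Subtype.ext_iff] at this
      · push_neg at hA
        exact Or.inl ⟨hA.1, hA.2.1, hA.2.2⟩
    rcases key with ⟨h1, h2, h3⟩ | ⟨h1, h2, h3⟩
    · have hpq : (arrowDelU.induce Xᶜ).Adj ⟨va1, h1⟩ ⟨vb2, h2⟩ := by
        show arrowGraph.Adj ArrowV.a1 ArrowV.b2; decide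
      have hqr : (arrowDelU.induce Xᶜ).Adj ⟨vb2, h2⟩ ⟨va2, h3⟩ := by
        show arrowGraph.Adj ArrowV.b2 ArrowV.a2; decide
      have hrp : (arrowDelU.induce Xᶜ).Adj ⟨va2, h3⟩ ⟨va1, h1⟩ := by
        show arrowGraph.Adj ArrowV.a2 ArrowV.a1; decide
      exact hX _ _ (triangle_cycle hpq hqr hrp) (by simp; decide)
    · have hpq : (arrowDelU.induce Xᶜ).Adj ⟨va3, h1⟩ ⟨vb4, h2⟩ := by
        show arrowGraph.Adj ArrowV.a3 ArrowV.b4; decide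
      have hqr : (arrowDelU.induce Xᶜ).Adj ⟨vb4, h2⟩ ⟨vv, h3⟩ := by
        show arrowGraph.Adj ArrowV.b4 ArrowV.v; decide
      have hrp : (arrowDelU.induce Xᶜ).Adj ⟨vv, h3⟩ ⟨va3, h1⟩ := by
        show arrowGraph.Adj ArrowV.v ArrowV.a3; decide
      exact hX _ _ (triangle_cycle hpq hqr hrp) (by simp; decide)
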